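/- As s → 2 from below, B(s) = ∫_{a,b≥0, a+b≤1} da db / ((a+b)(1-a)(1-b))^s is asymptotically equivalent to 3/(2-s), i.e. (2-s)·B(s) → 3. -/

import Mathlib

open MeasureTheory Real Filter Set

noncomputable section

lemma aux_rpow_le (s t : ℝ) (hs : 1 ≤ s) (hs2 : s ≤ 2) (ht : 1/4 ≤ t) (ht1 : t ≤ 1) :
    t ^ (-s) ≤ 1 + 32*(1-t) := by
  have ht0 : (0:ℝ) < t := by linarith
  have h1 : t ^ (-s) ≤ t ^ (-2:ℝ) := Real.rpow_le_rpow_of_exponent_ge ht0 ht1 (by linarith)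
  have h2 : t ^ (-2:ℝ) = (t^2)⁻¹ := by
    rw [Real.rpow_neg ht0.le, show (2:ℝ) = ((2:ℕ):ℝ) by norm_num, Real.rpow_natCast]
  have hq : (0:ℝ) ≤ 32*t^2 - t - 1 := by nlinarith [sq_nonneg (t - 1/4)]
  have h3 : (t^2)⁻¹ ≤ 1 + 32*(1-t) := by
    rw [inv_le_iff_one_le_mul₀ (by positivity)]
    nlinarith [mul_nonneg (sub_nonneg.2 ht1) hq]
  linarith [h2 ▸ h1]

lemma aux_one_le_rpow (s t : ℝ) (hs : 0 ≤ s) (ht0 : 0 < t) (ht1 : t ≤ 1) :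
    1 ≤ t ^ (-s) := by
  have := Real.rpow_le_rpow_of_exponent_ge ht0 ht1 (by linarith : -s ≤ 0)
  simpa using this

lemma aux_rpow_le_four (s t : ℝ) (hs : s ≤ 2) (ht : 1/2 ≤ t) (ht1 : t ≤ 1) :
    t ^ (-s) ≤ 4 := by
  have ht0 : (0:ℝ) < t := by linarith
  have h1 : t ^ (-s) ≤ t ^ (-2:ℝ) := Real.rpow_le_rpow_of_exponent_ge ht0 ht1 (by linarith)
  have h2 : t ^ (-2:ℝ) = (t^2)⁻¹ := by
    rw [Real.rpow_neg ht0.le, show (2:ℝ) = ((2:ℕ):ℝ) by norm_num, Real.rpow_natCast]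
  have h3 : (t^2)⁻¹ ≤ 4 := by
    rw [inv_le_iff_one_le_mul₀ (by positivity)]
    nlinarith
  linarith [h2 ▸ h1]



lemma key_case (s u x y : ℝ) (hs : 1 ≤ s) (hs2 : s ≤ 2)
    (hu : 0 < u) (hu1 : u ≤ 1) (hx : 1/2 ≤ x) (hx1 : x ≤ 1) (hy : 1/2 ≤ y) (hy1 : y ≤ 1)
    (hsum : u + x + y = 2) :
    |(u*x*y) ^ (-s) - (u ^ (-s) + x ^ (-s) + y ^ (-s))| ≤ 32 * u ^ (-(3/2:ℝ)) + 8 := by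
  have hx0 : (0:ℝ) < x := by linarith
  have hy0 : (0:ℝ) < y := by linarith
  have hmul : (u*x*y) ^ (-s) = u ^ (-s) * (x*y) ^ (-s) := by
    rw [mul_assoc, Real.mul_rpow hu.le (by positivity)]
  have ht : 1/4 ≤ x*y := by nlinarith
  have ht1 : x*y ≤ 1 := by nlinarith
  have h1t : 1 - x*y ≤ u := by nlinarith
  have hb1 : (x*y) ^ (-s) ≤ 1 + 32*u := by
    have := aux_rpow_le s (x*y) hs hs2 ht ht1
    linarith
  have hb2 : 1 ≤ (x*y) ^ (-s) := aux_one_le_rpow s (x*y) (by linarith) (by positivity) ht1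
  have hus : 0 < u ^ (-s) := Real.rpow_pos_of_pos hu _
  have hupow : u ^ (-s) * u = u ^ (1-s) := by
    rw [show (1-s) = -s + 1 by ring, Real.rpow_add hu, Real.rpow_one]
  have hule : u ^ (1-s) ≤ u ^ (-(3/2:ℝ)) :=
    Real.rpow_le_rpow_of_exponent_ge hu hu1 (by linarith)
  have hupper : (u*x*y) ^ (-s) - u ^ (-s) ≤ 32 * u ^ (-(3/2:ℝ)) := by
    have : (u*x*y) ^ (-s) ≤ u ^ (-s) + 32 * (u ^ (-s) * u) := by
      rw [hmul]; nlinarith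
    rw [hupow] at this
    nlinarith
  have hlower : u ^ (-s) ≤ (u*x*y) ^ (-s) := by rw [hmul]; nlinarith
  have hx4 : x ^ (-s) ≤ 4 := aux_rpow_le_four s x hs2 hx hx1
  have hy4 : y ^ (-s) ≤ 4 := aux_rpow_le_four s y hs2 hy hy1
  have hxp : 0 ≤ x ^ (-s) := Real.rpow_nonneg hx0.le _
  have hyp : 0 ≤ y ^ (-s) := Real.rpow_nonneg hy0.le _
  have hup : 0 ≤ u ^ (-(3/2:ℝ)) := Real.rpow_nonneg hu.le _
  rw [abs_le]
  constructor <;> nlinarith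

lemma key_big (s u x y : ℝ) (hs : 1 ≤ s) (hs2 : s ≤ 2)
    (hu : 1/2 ≤ u) (hu1 : u ≤ 1) (hx : 1/2 ≤ x) (hx1 : x ≤ 1) (hy : 1/2 ≤ y) (hy1 : y ≤ 1) :
    |(u*x*y) ^ (-s) - (u ^ (-s) + x ^ (-s) + y ^ (-s))| ≤ 128 := by
  have hu0 : (0:ℝ) < u := by linarith
  have hx0 : (0:ℝ) < x := by linarith
  have hy0 : (0:ℝ) < y := by linarith
  have hxy : 1/4 ≤ x*y := by nlinarith
  have hxy1 : x*y ≤ 1 := by nlinarith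
  have h8 : 1/8 ≤ u*x*y := by
    have := mul_le_mul hu hxy (by norm_num) hu0.le
    rw [mul_assoc]; linarith
  have h1 : u*x*y ≤ 1 := by
    rw [mul_assoc]; exact mul_le_one₀ hu1 (by positivity) hxy1
  have hf : (u*x*y) ^ (-s) ≤ (u*x*y) ^ (-2:ℝ) :=
    Real.rpow_le_rpow_of_exponent_ge (by positivity) h1 (by linarith)
  have h2 : (u*x*y) ^ (-2:ℝ) = ((u*x*y)^2)⁻¹ := by
    rw [Real.rpow_neg (by positivity), show (2:ℝ) = ((2:ℕ):ℝ) by norm_num, Real.rpow_natCast]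
  have h3 : ((u*x*y)^2)⁻¹ ≤ 64 := by
    rw [inv_le_iff_one_le_mul₀ (by positivity)]
    nlinarith
  have hfp : 0 ≤ (u*x*y) ^ (-s) := Real.rpow_nonneg (by positivity) _
  have hu4 : u ^ (-s) ≤ 4 := aux_rpow_le_four s u hs2 hu hu1
  have hx4 : x ^ (-s) ≤ 4 := aux_rpow_le_four s x hs2 hx hx1
  have hy4 : y ^ (-s) ≤ 4 := aux_rpow_le_four s y hs2 hy hy1
  have hxp : 0 ≤ x ^ (-s) := Real.rpow_nonneg hx0.le _
  have hyp : 0 ≤ y ^ (-s) := Real.rpow_nonneg hy0.le _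
  have hup : 0 ≤ u ^ (-s) := Real.rpow_nonneg hu0.le _
  rw [abs_le]
  constructor <;> nlinarith [h2 ▸ hf]

lemma key_main (s u x y : ℝ) (hs : 1 ≤ s) (hs2 : s ≤ 2)
    (hu : 0 < u) (hu1 : u ≤ 1) (hx : 0 < x) (hx1 : x ≤ 1) (hy : 0 < y) (hy1 : y ≤ 1)
    (hsum : u + x + y = 2) :
    |(u*x*y) ^ (-s) - (u ^ (-s) + x ^ (-s) + y ^ (-s))| ≤
      128 * (u ^ (-(3/2:ℝ)) + x ^ (-(3/2:ℝ)) + y ^ (-(3/2:ℝ))) + 128 := by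
  have hup : 0 ≤ u ^ (-(3/2:ℝ)) := Real.rpow_nonneg hu.le _
  have hxp : 0 ≤ x ^ (-(3/2:ℝ)) := Real.rpow_nonneg hx.le _
  have hyp : 0 ≤ y ^ (-(3/2:ℝ)) := Real.rpow_nonneg hy.le _
  rcases le_or_gt u (1/2) with h | hU
  · have := key_case s u x y hs hs2 hu hu1 (by linarith) hx1 (by linarith) hy1 hsum
    linarith
  rcases le_or_gt x (1/2) with h | hX
  · have := key_case s x u y hs hs2 hx hx1 (by linarith) hu1 (by linarith) hy1 (by linarith)
    rw [show x*u*y = u*x*y by ring] at this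
    rw [show x ^ (-s) + u ^ (-s) + y ^ (-s) = u ^ (-s) + x ^ (-s) + y ^ (-s) by ring] at this
    linarith
  rcases le_or_gt y (1/2) with h | hY
  · have := key_case s y u x hs hs2 hy hy1 (by linarith) hu1 (by linarith) hx1 (by linarith)
    rw [show y*u*x = u*x*y by ring] at this
    rw [show y ^ (-s) + u ^ (-s) + x ^ (-s) = u ^ (-s) + x ^ (-s) + y ^ (-s) by ring] at this
    linarith
  · have := key_big s u x y hs hs2 (by linarith) hu1 (by linarith) hx1 (by linarith) hy1
    linarith

lemma key_dom_case (s u x y : ℝ) (hs : 1 ≤ s) (hs2 : s ≤ 2)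
    (hu : 0 < u) (hx : 1/2 ≤ x) (hx1 : x ≤ 1) (hy : 1/2 ≤ y) (hy1 : y ≤ 1) :
    (u*x*y) ^ (-s) ≤ 16 * u ^ (-s) := by
  have hx0 : (0:ℝ) < x := by linarith
  have hy0 : (0:ℝ) < y := by linarith
  have hmul : (u*x*y) ^ (-s) = u ^ (-s) * (x*y) ^ (-s) := by
    rw [mul_assoc, Real.mul_rpow hu.le (by positivity)]
  have ht : 1/4 ≤ x*y := by nlinarith
  have ht1 : x*y ≤ 1 := by nlinarith
  have h1 : (x*y) ^ (-s) ≤ (x*y) ^ (-2:ℝ) :=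
    Real.rpow_le_rpow_of_exponent_ge (by positivity) ht1 (by linarith)
  have h2 : (x*y) ^ (-2:ℝ) = ((x*y)^2)⁻¹ := by
    rw [Real.rpow_neg (by positivity), show (2:ℝ) = ((2:ℕ):ℝ) by norm_num, Real.rpow_natCast]
  have h3 : ((x*y)^2)⁻¹ ≤ 16 := by
    rw [inv_le_iff_one_le_mul₀ (by positivity)]
    nlinarith
  have hus : 0 ≤ u ^ (-s) := Real.rpow_nonneg hu.le _
  rw [hmul]
  nlinarith [h2 ▸ h1]

lemma key_dom (s u x y : ℝ) (hs : 1 ≤ s) (hs2 : s ≤ 2)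
    (hu : 0 < u) (hu1 : u ≤ 1) (hx : 0 < x) (hx1 : x ≤ 1) (hy : 0 < y) (hy1 : y ≤ 1)
    (hsum : u + x + y = 2) :
    (u*x*y) ^ (-s) ≤ 64 * (u ^ (-s) + x ^ (-s) + y ^ (-s)) := by
  have h1 : 1 ≤ u ^ (-s) := aux_one_le_rpow s u (by linarith) hu hu1
  have h2 : 0 ≤ x ^ (-s) := Real.rpow_nonneg hx.le _
  have h3 : 0 ≤ y ^ (-s) := Real.rpow_nonneg hy.le _
  have h2' : 1 ≤ x ^ (-s) := aux_one_le_rpow s x (by linarith) hx hx1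
  have h1' : 0 ≤ u ^ (-s) := Real.rpow_nonneg hu.le _
  have h3' : 1 ≤ y ^ (-s) := aux_one_le_rpow s y (by linarith) hy hy1
  rcases le_or_gt u (1/2) with h | hU
  · have := key_dom_case s u x y hs hs2 hu (by linarith) hx1 (by linarith) hy1
    linarith
  rcases le_or_gt x (1/2) with h | hX
  · have := key_dom_case s x u y hs hs2 hx (by linarith) hu1 (by linarith) hy1
    rw [show x*u*y = u*x*y by ring] at this
    linarith
  rcases le_or_gt y (1/2) with h | hY
  · have := key_dom_case s y u x hs hs2 hy (by linarith) hu1 (by linarith) hx1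
    rw [show y*u*x = u*x*y by ring] at this
    linarith
  · have := key_big s u x y hs hs2 (by linarith) hu1 (by linarith) hx1 (by linarith) hy1
    have := abs_le.1 this
    linarith [this.2]


def T : Set (ℝ × ℝ) := {p | 0 ≤ p.1 ∧ 0 ≤ p.2 ∧ p.1 + p.2 ≤ 1}

lemma mem_T_iff (p : ℝ × ℝ) : p ∈ T ↔ 0 ≤ p.1 ∧ 0 ≤ p.2 ∧ p.1 + p.2 ≤ 1 := Iff.rfl

lemma measurableSet_T : MeasurableSet T := by
  apply MeasurableSet.inter
  · exact measurableSet_le measurable_const measurable_fst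
  apply MeasurableSet.inter
  · exact measurableSet_le measurable_const measurable_snd
  · exact measurableSet_le (measurable_fst.add measurable_snd) measurable_const

lemma slice_eq (f : ℝ × ℝ → ℝ) (a : ℝ) (ha : 0 < a) (b : ℝ) :
    T.indicator f (a, b) = (Icc (0:ℝ) (1-a)).indicator (fun b => f (a, b)) b := by
  by_cases hb : b ∈ Icc (0:ℝ) (1-a)
  · rw [indicator_of_mem hb, indicator_of_mem]
    rw [mem_T_iff]
    refine ⟨ha.le, hb.1, ?_⟩
    have := hb.2; simp only [] at this ⊢; linarith
  · rw [indicator_of_notMem hb, indicator_of_notMem]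
    intro hmem
    rw [mem_T_iff] at hmem
    refine hb ⟨hmem.2.1, ?_⟩
    have := hmem.2.2; simp only [] at this; linarith

lemma fubini_T (f : ℝ × ℝ → ℝ) (hf : IntegrableOn f T) :
    ∫ p in T, f p = ∫ a in Ioc (0:ℝ) 1, ∫ b in Ioc (0:ℝ) (1-a), f (a, b) := by
  have hind : Integrable (T.indicator f) := (integrable_indicator_iff measurableSet_T).2 hf
  rw [← integral_indicator measurableSet_T]
  rw [Measure.volume_eq_prod] at hind ⊢
  rw [integral_prod _ hind]
  rw [← integral_indicator measurableSet_Ioc]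
  apply integral_congr_ae
  have h0 : ∀ᵐ a : ℝ, a ≠ 0 := by
    rw [ae_iff]; simpa using measure_singleton (0:ℝ)
  filter_upwards [h0] with a ha0
  rcases lt_or_gt_of_ne ha0 with ha | ha
  · have hz : ∀ b, T.indicator f (a, b) = 0 := by
      intro b
      apply indicator_of_notMem
      intro hmem
      rw [mem_T_iff] at hmem
      exact absurd hmem.1 (by simp only []; linarith)
    simp only [hz, integral_zero]
    rw [indicator_of_notMem]
    simp only [mem_Ioc, not_and_or, not_lt, not_le]
    left; linarith
  · have hz : ∀ b, T.indicator f (a, b) = (Icc (0:ℝ) (1-a)).indicator (fun b => f (a, b)) b :=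
      slice_eq f a ha
    simp only [hz]
    rw [integral_indicator measurableSet_Icc]
    by_cases ha1 : a ≤ 1
    · rw [Set.indicator_of_mem (show a ∈ Ioc (0:ℝ) 1 from ⟨ha, ha1⟩)
        (fun a => ∫ b in Ioc (0:ℝ) (1-a), f (a, b))]
      exact integral_Icc_eq_integral_Ioc
    · rw [indicator_of_notMem (by simp [mem_Ioc, ha1])]
      rw [Icc_eq_empty (by linarith), Measure.restrict_empty, integral_zero_measure]

lemma integrableOn_T (f : ℝ × ℝ → ℝ) (hm : AEStronglyMeasurable f (volume.restrict T))
    (h1 : ∀ a ∈ Ioo (0:ℝ) 1, IntegrableOn (fun b => f (a, b)) (Icc 0 (1-a)))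
    (h2 : IntegrableOn (fun a => ∫ b in Icc (0:ℝ) (1-a), ‖f (a, b)‖) (Ioc 0 1)) :
    IntegrableOn f T := by
  rw [← integrable_indicator_iff measurableSet_T]
  have hasm : AEStronglyMeasurable (T.indicator f) volume :=
    (aestronglyMeasurable_indicator_iff measurableSet_T).2 hm
  rw [Measure.volume_eq_prod] at hasm ⊢
  rw [integrable_prod_iff hasm]
  have h0 : ∀ᵐ a : ℝ, a ≠ 0 ∧ a ≠ 1 := by
    rw [ae_iff]
    refine measure_mono_null ?_ (measure_union_null (measure_singleton (0:ℝ)) (measure_singleton 1))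
    intro a
    simp [not_and_or, or_comm]
    tauto
  constructor
  · filter_upwards [h0] with a ⟨ha0, ha1⟩
    rcases lt_or_gt_of_ne ha0 with ha | ha
    · have hz : ∀ b, T.indicator f (a, b) = 0 := by
        intro b
        apply indicator_of_notMem
        intro hmem
        rw [mem_T_iff] at hmem
        exact absurd hmem.1 (by simp only []; linarith)
      simp only [hz]
      exact integrable_zero _ _ _
    · simp only [slice_eq f a ha]
      rw [integrable_indicator_iff measurableSet_Icc]
      rcases lt_or_gt_of_ne ha1 with h1a | h1a
      · exact h1 a ⟨ha, h1a⟩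
      · rw [Icc_eq_empty (by linarith)]
        simp [IntegrableOn]
  · apply Integrable.congr ((integrable_indicator_iff measurableSet_Ioc).2 h2)
    filter_upwards [h0] with a ⟨ha0, _⟩
    rcases lt_or_gt_of_ne ha0 with ha | ha
    · have hz : ∀ b, T.indicator f (a, b) = 0 := by
        intro b
        apply indicator_of_notMem
        intro hmem
        rw [mem_T_iff] at hmem
        exact absurd hmem.1 (by simp only []; linarith)
      rw [Set.indicator_of_notMem (by simp [mem_Ioc]; intro h; linarith)]
      simp only [hz]
      simp
    · have hz : ∀ b, ‖T.indicator f (a, b)‖ = (Icc (0:ℝ) (1-a)).indicator (fun b => ‖f (a, b)‖) b := by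
        intro b
        rw [slice_eq f a ha, norm_indicator_eq_indicator_norm]
      by_cases ha1 : a ≤ 1
      · rw [Set.indicator_of_mem (show a ∈ Ioc (0:ℝ) 1 from ⟨ha, ha1⟩)
          (fun a => ∫ b in Icc (0:ℝ) (1-a), ‖f (a, b)‖)]
        simp only [hz]
        rw [integral_indicator measurableSet_Icc]
      · rw [Set.indicator_of_notMem (by simp [mem_Ioc, ha1])]
        simp only [hz]
        rw [integral_indicator measurableSet_Icc, Icc_eq_empty (by linarith),
          Measure.restrict_empty, integral_zero_measure]


-- inner integral computation: ∫ t in a..1, t^(-s), 0 < a ≤ 1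
lemma inner_val (s a : ℝ) (hs1 : 1 < s) (ha : 0 < a) (ha1 : a ≤ 1) :
    ∫ b in (0:ℝ)..(1-a), (a + b) ^ (-s) = (1 - a ^ (1-s))/(1-s) := by
  have h1 : (∫ b in (0:ℝ)..(1-a), (a + b) ^ (-s)) = ∫ t in a..1, t ^ (-s) := by
    have := intervalIntegral.integral_comp_add_left (a := (0:ℝ)) (b := 1-a)
      (fun t => t ^ (-s)) a
    simpa using this
  rw [h1, integral_rpow (Or.inr ⟨by intro h; rw [neg_eq_iff_eq_neg] at h; linarith,
    by rw [Set.uIcc_of_le ha1]; intro h; exact absurd (Set.mem_Icc.1 h).1 (by linarith)⟩)]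
  rw [Real.one_rpow]
  ring_nf

lemma inner_val3 (s a : ℝ) (hs1 : 1 < s) (ha : 0 < a) (ha1 : a ≤ 1) :
    ∫ b in (0:ℝ)..(1-a), (1 - b) ^ (-s) = (1 - a ^ (1-s))/(1-s) := by
  have h1 : (∫ b in (0:ℝ)..(1-a), (1 - b) ^ (-s)) = ∫ t in a..1, t ^ (-s) := by
    have := intervalIntegral.integral_comp_sub_left (a := (0:ℝ)) (b := 1-a)
      (fun t => t ^ (-s)) 1
    simpa using this
  rw [h1, integral_rpow (Or.inr ⟨by intro h; rw [neg_eq_iff_eq_neg] at h; linarith,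
    by rw [Set.uIcc_of_le ha1]; intro h; exact absurd (Set.mem_Icc.1 h).1 (by linarith)⟩)]
  rw [Real.one_rpow]
  ring_nf

-- outer: ∫ a in 0..1, (1 - a^(1-s))/(1-s) = 1/(2-s)
lemma outer_val (s : ℝ) (hs1 : 1 < s) (hs2 : s < 2) :
    ∫ a in (0:ℝ)..1, (1 - a ^ (1-s))/(1-s) = 1/(2-s) := by
  have hne : (1:ℝ) - s ≠ 0 := by intro h; linarith [sub_eq_zero.1 h]
  have h2ne : (2:ℝ) - s ≠ 0 := by intro h; linarith [sub_eq_zero.1 h]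
  have hint : IntervalIntegrable (fun a : ℝ => a ^ (1-s)) volume 0 1 :=
    intervalIntegral.intervalIntegrable_rpow' (by linarith)
  have h0 : ∀ a : ℝ, (1 - a ^ (1-s))/(1-s) = (1/(1-s)) * (1 - a ^ (1-s)) := by
    intro a; ring
  simp_rw [h0]
  rw [intervalIntegral.integral_const_mul]
  rw [intervalIntegral.integral_sub intervalIntegrable_const hint]
  rw [integral_rpow (Or.inl (by linarith))]
  rw [Real.one_rpow, Real.zero_rpow (by intro h; linarith)]
  simp only [intervalIntegral.integral_const, smul_eq_mul, mul_one, sub_zero]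
  have : (1:ℝ) - s + 1 = 2 - s := by ring
  rw [this]
  field_simp
  ring_nf

lemma outer_val2 (s : ℝ) (hs1 : 1 < s) (hs2 : s < 2) :
    ∫ a in (0:ℝ)..1, (1 - a) ^ (1-s) = 1/(2-s) := by
  have h1 : (∫ a in (0:ℝ)..1, (1 - a) ^ (1-s)) = ∫ t in (0:ℝ)..1, t ^ (1-s) := by
    have := intervalIntegral.integral_comp_sub_left (a := (0:ℝ)) (b := 1)
      (fun t => t ^ (1-s)) 1
    simpa using this
  rw [h1, integral_rpow (Or.inl (by linarith))]
  rw [Real.one_rpow, Real.zero_rpow (by intro h; linarith)]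
  have : (1:ℝ) - s + 1 = 2 - s := by ring
  rw [this]
  ring


-- outer integrand integrability
lemma outer_int (s : ℝ) (hs1 : 1 < s) (hs2 : s < 2) :
    IntegrableOn (fun a : ℝ => (1 - a ^ (1-s))/(1-s)) (Ioc 0 1) := by
  have h := intervalIntegral.intervalIntegrable_rpow' (show (-1:ℝ) < 1-s by linarith)
    (a := (0:ℝ)) (b := 1)
  rw [intervalIntegrable_iff_integrableOn_Ioc_of_le zero_le_one] at h
  have hc : IntegrableOn (fun _ : ℝ => (1:ℝ)) (Ioc 0 1) :=
    integrableOn_const measure_Ioc_lt_top.ne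
  exact (hc.sub h).div_const _

lemma outer_int2 (s : ℝ) (hs1 : 1 < s) (hs2 : s < 2) :
    IntegrableOn (fun a : ℝ => (1 - a) ^ (1-s)) (Ioc 0 1) := by
  have h := intervalIntegral.intervalIntegrable_rpow' (show (-1:ℝ) < 1-s by linarith)
    (a := (0:ℝ)) (b := 1)
  have h2 := (h.comp_sub_left 1).symm
  simp only [sub_zero, sub_self] at h2
  rwa [intervalIntegrable_iff_integrableOn_Ioc_of_le zero_le_one] at h2

-- G1 integrable
lemma G1_int (s : ℝ) (hs1 : 1 < s) (hs2 : s < 2) :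
    IntegrableOn (fun p : ℝ × ℝ => (p.1 + p.2) ^ (-s)) T := by
  apply integrableOn_T
  · exact ((measurable_fst.add measurable_snd).pow_const (-s)).aestronglyMeasurable
  · intro a ha
    apply ContinuousOn.integrableOn_Icc
    apply ContinuousOn.rpow_const (continuous_const.add continuous_id).continuousOn
    intro x hx
    left
    have h1 := hx.1
    have := ha.1
    simp only [Pi.add_apply, id_eq]
    positivity
  · apply (outer_int s hs1 hs2).congr_fun _ measurableSet_Ioc
    intro a ha
    have ha0 : 0 < a := ha.1
    have ha1 : a ≤ 1 := ha.2
    have h1a : 0 ≤ 1 - a := by linarith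
    have heq : EqOn (fun b : ℝ => (1 - a ^ (1-s))/(1-s)) (fun b => b) ∅ := by intro; simp
    simp only []
    rw [show (∫ b in Icc (0:ℝ) (1-a), ‖(a + b) ^ (-s)‖) = ∫ b in Icc (0:ℝ) (1-a), (a + b) ^ (-s) from
      setIntegral_congr_fun measurableSet_Icc (fun b hb => Real.norm_of_nonneg
        (Real.rpow_nonneg (by linarith [hb.1]) _))]
    rw [integral_Icc_eq_integral_Ioc, ← intervalIntegral.integral_of_le h1a]
    exact (inner_val s a hs1 ha0 ha1).symm

lemma G1_val (s : ℝ) (hs1 : 1 < s) (hs2 : s < 2) :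
    ∫ p in T, (p.1 + p.2) ^ (-s) = 1/(2-s) := by
  rw [fubini_T _ (G1_int s hs1 hs2)]
  rw [setIntegral_congr_fun measurableSet_Ioc (g := fun a : ℝ => (1 - a ^ (1-s))/(1-s))
    (fun a ha => by
      rw [← intervalIntegral.integral_of_le (by linarith [ha.2] : (0:ℝ) ≤ 1 - a)]
      exact inner_val s a hs1 ha.1 ha.2)]
  rw [← intervalIntegral.integral_of_le zero_le_one]
  exact outer_val s hs1 hs2

lemma G3_int (s : ℝ) (hs1 : 1 < s) (hs2 : s < 2) :
    IntegrableOn (fun p : ℝ × ℝ => (1 - p.2) ^ (-s)) T := by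
  apply integrableOn_T
  · exact ((measurable_const.sub measurable_snd).pow_const (-s)).aestronglyMeasurable
  · intro a ha
    apply ContinuousOn.integrableOn_Icc
    apply ContinuousOn.rpow_const (continuous_const.sub continuous_id).continuousOn
    intro x hx
    left
    have h1 := hx.2
    have := ha.2
    simp only [Pi.sub_apply, id_eq]
    intro h
    have : x = 1 := by linarith
    nlinarith [ha.1, ha.2, hx.1]
  · apply (outer_int s hs1 hs2).congr_fun _ measurableSet_Ioc
    intro a ha
    have ha0 : 0 < a := ha.1
    have ha1 : a ≤ 1 := ha.2
    have h1a : 0 ≤ 1 - a := by linarith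
    simp only []
    rw [show (∫ b in Icc (0:ℝ) (1-a), ‖(1 - b) ^ (-s)‖) = ∫ b in Icc (0:ℝ) (1-a), (1 - b) ^ (-s) from
      setIntegral_congr_fun measurableSet_Icc (fun b hb => Real.norm_of_nonneg
        (Real.rpow_nonneg (by linarith [hb.2]) _))]
    rw [integral_Icc_eq_integral_Ioc, ← intervalIntegral.integral_of_le h1a]
    exact (inner_val3 s a hs1 ha0 ha1).symm

lemma G3_val (s : ℝ) (hs1 : 1 < s) (hs2 : s < 2) :
    ∫ p in T, (1 - p.2) ^ (-s) = 1/(2-s) := by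
  rw [fubini_T _ (G3_int s hs1 hs2)]
  rw [setIntegral_congr_fun measurableSet_Ioc (g := fun a : ℝ => (1 - a ^ (1-s))/(1-s))
    (fun a ha => by
      rw [← intervalIntegral.integral_of_le (by linarith [ha.2] : (0:ℝ) ≤ 1 - a)]
      exact inner_val3 s a hs1 ha.1 ha.2)]
  rw [← intervalIntegral.integral_of_le zero_le_one]
  exact outer_val s hs1 hs2

lemma G2_inner (s a : ℝ) (hs1 : 1 < s) (ha : 0 < a) (ha1 : a ≤ 1) :
    ∫ _ in Icc (0:ℝ) (1-a), (1 - a) ^ (-s) = (1 - a) ^ (1-s) := by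
  rw [setIntegral_const, measureReal_def, Real.volume_Icc, smul_eq_mul]
  rw [ENNReal.toReal_ofReal (by linarith)]
  rcases eq_or_lt_of_le ha1 with h | h
  · subst h
    simp only [sub_self, sub_zero]
    rw [Real.zero_rpow (show (1:ℝ) - s ≠ 0 by intro hh; linarith)]
    simp
  · rw [show (1:ℝ) - s = 1 + (-s) by ring,
      Real.rpow_add (show (0:ℝ) < 1 - a by linarith) 1 (-s), Real.rpow_one, sub_zero]

lemma G2_int (s : ℝ) (hs1 : 1 < s) (hs2 : s < 2) :
    IntegrableOn (fun p : ℝ × ℝ => (1 - p.1) ^ (-s)) T := by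
  apply integrableOn_T
  · exact ((measurable_const.sub measurable_fst).pow_const (-s)).aestronglyMeasurable
  · intro a ha
    show IntegrableOn (fun _ : ℝ => (1 - a) ^ (-s)) (Icc 0 (1-a)) volume
    exact integrableOn_const measure_Icc_lt_top.ne
  · apply (outer_int2 s hs1 hs2).congr_fun _ measurableSet_Ioc
    intro a ha
    have ha0 : 0 < a := ha.1
    have ha1 : a ≤ 1 := ha.2
    simp only []
    rw [show (∫ _ in Icc (0:ℝ) (1-a), ‖(1 - a) ^ (-s)‖) = ∫ _ in Icc (0:ℝ) (1-a), (1 - a) ^ (-s) from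
      setIntegral_congr_fun measurableSet_Icc (fun b _ => Real.norm_of_nonneg
        (Real.rpow_nonneg (by linarith) _))]
    exact (G2_inner s a hs1 ha0 ha1).symm

lemma G2_val (s : ℝ) (hs1 : 1 < s) (hs2 : s < 2) :
    ∫ p in T, (1 - p.1) ^ (-s) = 1/(2-s) := by
  rw [fubini_T _ (G2_int s hs1 hs2)]
  rw [setIntegral_congr_fun measurableSet_Ioc (g := fun a : ℝ => (1 - a) ^ (1-s))
    (fun a ha => by
      show (∫ _ in Ioc (0:ℝ) (1-a), (1 - a) ^ (-s)) = (1 - a) ^ (1-s)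
      rw [← integral_Icc_eq_integral_Ioc]
      exact G2_inner s a hs1 ha.1 ha.2)]
  rw [← intervalIntegral.integral_of_le zero_le_one]
  exact outer_val2 s hs1 hs2

lemma ae_fst_ne (c : ℝ) : ∀ᵐ p : ℝ × ℝ, p.1 ≠ c := by
  rw [ae_iff]
  have h : {p : ℝ × ℝ | ¬ p.1 ≠ c} = ({c} : Set ℝ) ×ˢ (univ : Set ℝ) := by
    ext p
    simp only [Set.mem_setOf_eq, not_ne_iff, Set.mem_prod, Set.mem_singleton_iff, Set.mem_univ,
      and_true]
  rw [h, Measure.volume_eq_prod, Measure.prod_prod]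
  simp

lemma ae_T : ∀ᵐ p : ℝ × ℝ ∂(volume.restrict T),
    0 < p.1 + p.2 ∧ p.1 + p.2 ≤ 1 ∧ 0 < 1 - p.1 ∧ 1 - p.1 ≤ 1 ∧ 0 < 1 - p.2 ∧ 1 - p.2 ≤ 1 := by
  have h0 : ∀ᵐ p : ℝ × ℝ ∂(volume.restrict T), p.1 ≠ 0 := ae_restrict_of_ae (ae_fst_ne 0)
  have h1 : ∀ᵐ p : ℝ × ℝ ∂(volume.restrict T), p.1 ≠ 1 := ae_restrict_of_ae (ae_fst_ne 1)
  have hm : ∀ᵐ p : ℝ × ℝ ∂(volume.restrict T), p ∈ T := ae_restrict_mem measurableSet_T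
  filter_upwards [h0, h1, hm] with p hp0 hp1 hpm
  rw [mem_T_iff] at hpm
  obtain ⟨ha, hb, hab⟩ := hpm
  have ha' : 0 < p.1 := lt_of_le_of_ne ha (Ne.symm hp0)
  have ha1 : p.1 < 1 := lt_of_le_of_ne (by linarith) hp1
  refine ⟨by linarith, hab, by linarith, by linarith, by linarith, by linarith⟩

lemma volume_T_lt_top : volume T < ⊤ := by
  have hsub : T ⊆ (Icc (0:ℝ) 1) ×ˢ (Icc (0:ℝ) 1) := by
    intro p hp
    rw [mem_T_iff] at hp
    exact ⟨⟨hp.1, by linarith [hp.2.1, hp.2.2]⟩, ⟨hp.2.1, by linarith [hp.1, hp.2.2]⟩⟩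
  calc volume T ≤ volume ((Icc (0:ℝ) 1) ×ˢ (Icc (0:ℝ) 1)) := measure_mono hsub
    _ = 1 := by
        rw [Measure.volume_eq_prod, Measure.prod_prod, Real.volume_Icc]
        simp
    _ < ⊤ := by simp

lemma F_meas (s : ℝ) : Measurable (fun p : ℝ × ℝ => ((p.1 + p.2) * (1 - p.1) * (1 - p.2)) ^ (-s)) :=
  (((measurable_fst.add measurable_snd).mul (measurable_const.sub measurable_fst)).mul
    (measurable_const.sub measurable_snd)).pow_const (-s)

lemma F_int (s : ℝ) (hs1 : 1 < s) (hs2 : s < 2) :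
    IntegrableOn (fun p : ℝ × ℝ => ((p.1 + p.2) * (1 - p.1) * (1 - p.2)) ^ (-s)) T := by
  apply Integrable.mono'
    (g := fun p : ℝ × ℝ => 64 * ((p.1 + p.2) ^ (-s) + (1 - p.1) ^ (-s) + (1 - p.2) ^ (-s)))
  · exact (((G1_int s hs1 hs2).add (G2_int s hs1 hs2)).add (G3_int s hs1 hs2)).const_mul 64
  · exact (F_meas s).aestronglyMeasurable
  · filter_upwards [ae_T] with p ⟨h1, h2, h3, h4, h5, h6⟩
    rw [Real.norm_of_nonneg (Real.rpow_nonneg (by positivity) _)]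
    exact key_dom s _ _ _ hs1.le hs2.le h1 h2 h3 h4 h5 h6 (by ring)

lemma H_int : IntegrableOn (fun p : ℝ × ℝ =>
    128 * ((p.1 + p.2) ^ (-(3/2:ℝ)) + (1 - p.1) ^ (-(3/2:ℝ)) + (1 - p.2) ^ (-(3/2:ℝ))) + 128) T := by
  have h32 : (1:ℝ) < 3/2 := by norm_num
  have h32' : (3/2:ℝ) < 2 := by norm_num
  have e : ∀ a : ℝ, a ^ (-(3/2:ℝ)) = a ^ (-(3/2:ℝ)) := fun _ => rfl
  refine Integrable.add ?_ (integrableOn_const volume_T_lt_top.ne)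
  exact (((G1_int (3/2) h32 h32').add (G2_int (3/2) h32 h32')).add
    (G3_int (3/2) h32 h32')).const_mul 128

lemma main_bound (s : ℝ) (hs1 : 3/2 < s) (hs2 : s < 2) :
    |(2 - s) * (∫ p in T, ((p.1 + p.2) * (1 - p.1) * (1 - p.2)) ^ (-s)) - 3|
      ≤ (2 - s) * (∫ p in T,
        (128 * ((p.1 + p.2) ^ (-(3/2:ℝ)) + (1 - p.1) ^ (-(3/2:ℝ)) + (1 - p.2) ^ (-(3/2:ℝ))) + 128)) := by
  have h1 : 1 < s := by linarith
  have hFi := F_int s h1 hs2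
  have hG1 := G1_int s h1 hs2
  have hG2 := G2_int s h1 hs2
  have hG3 := G3_int s h1 hs2
  have hG : IntegrableOn (fun p : ℝ × ℝ =>
      (p.1 + p.2) ^ (-s) + (1 - p.1) ^ (-s) + (1 - p.2) ^ (-s)) T := (hG1.add hG2).add hG3
  have hD : IntegrableOn (fun p : ℝ × ℝ =>
      ((p.1 + p.2) * (1 - p.1) * (1 - p.2)) ^ (-s)
        - ((p.1 + p.2) ^ (-s) + (1 - p.1) ^ (-s) + (1 - p.2) ^ (-s))) T := hFi.sub hG
  have hsplit : (∫ p in T, ((p.1 + p.2) * (1 - p.1) * (1 - p.2)) ^ (-s))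
      = (∫ p in T, (((p.1 + p.2) * (1 - p.1) * (1 - p.2)) ^ (-s)
        - ((p.1 + p.2) ^ (-s) + (1 - p.1) ^ (-s) + (1 - p.2) ^ (-s)))) + 3/(2-s) := by
    have e1 := integral_add (μ := volume.restrict T) (hG1.add hG2) hG3
    have e2 := integral_add (μ := volume.restrict T) hG1 hG2
    simp only [Pi.add_apply] at e1 e2
    rw [integral_sub hFi hG, e1, e2, G1_val s h1 hs2, G2_val s h1 hs2, G3_val s h1 hs2]
    ring
  have habs : |∫ p in T, (((p.1 + p.2) * (1 - p.1) * (1 - p.2)) ^ (-s)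
        - ((p.1 + p.2) ^ (-s) + (1 - p.1) ^ (-s) + (1 - p.2) ^ (-s)))|
      ≤ ∫ p in T,
        (128 * ((p.1 + p.2) ^ (-(3/2:ℝ)) + (1 - p.1) ^ (-(3/2:ℝ)) + (1 - p.2) ^ (-(3/2:ℝ))) + 128) := by
    have hn := norm_integral_le_integral_norm (μ := volume.restrict T)
      (f := fun p : ℝ × ℝ => ((p.1 + p.2) * (1 - p.1) * (1 - p.2)) ^ (-s)
        - ((p.1 + p.2) ^ (-s) + (1 - p.1) ^ (-s) + (1 - p.2) ^ (-s)))
    rw [Real.norm_eq_abs] at hn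
    refine hn.trans (integral_mono_ae hD.norm H_int ?_)
    filter_upwards [ae_T] with p ⟨hp1, hp2, hp3, hp4, hp5, hp6⟩
    rw [Real.norm_eq_abs]
    exact key_main s _ _ _ h1.le hs2.le hp1 hp2 hp3 hp4 hp5 hp6 (by ring)
  have h2s : (0:ℝ) < 2 - s := by linarith
  have heq : (2 - s) * (∫ p in T, ((p.1 + p.2) * (1 - p.1) * (1 - p.2)) ^ (-s)) - 3
      = (2 - s) * ∫ p in T, (((p.1 + p.2) * (1 - p.1) * (1 - p.2)) ^ (-s)
        - ((p.1 + p.2) ^ (-s) + (1 - p.1) ^ (-s) + (1 - p.2) ^ (-s))) := by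
    have hc : (2 - s) * (3/(2-s)) = 3 := by field_simp
    rw [hsplit, mul_add, hc]
    ring
  rw [heq, abs_mul, abs_of_pos h2s]
  exact mul_le_mul_of_nonneg_left habs h2s.le

/-- As `s → 2⁻`, `(2-s) · B(s) → 3` where
`B(s) = ∫_{a,b≥0, a+b≤1} ((a+b)(1-a)(1-b))^{-s}`. -/
theorem stmt_2 :
    Tendsto (fun s : ℝ =>
      (2 - s) * ∫ p in {p : ℝ × ℝ | 0 ≤ p.1 ∧ 0 ≤ p.2 ∧ p.1 + p.2 ≤ 1},
        ((p.1 + p.2) * (1 - p.1) * (1 - p.2)) ^ (-s))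
      (nhdsWithin 2 (Set.Iio 2)) (nhds 3) := by
  have hT : {p : ℝ × ℝ | 0 ≤ p.1 ∧ 0 ≤ p.2 ∧ p.1 + p.2 ≤ 1} = T := rfl
  rw [hT]
  set M := ∫ p in T,
    (128 * ((p.1 + p.2) ^ (-(3/2:ℝ)) + (1 - p.1) ^ (-(3/2:ℝ)) + (1 - p.2) ^ (-(3/2:ℝ))) + 128)
    with hM
  have hev : ∀ᶠ s in nhdsWithin (2:ℝ) (Set.Iio 2), s ∈ Ioo (3/2:ℝ) 2 :=
    Ioo_mem_nhdsLT_of_mem (by norm_num)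
  have hg : Tendsto (fun s : ℝ => (2 - s) * M) (nhdsWithin 2 (Set.Iio 2)) (nhds 0) := by
    have h : Tendsto (fun s : ℝ => (2 - s) * M) (nhds 2) (nhds ((2 - 2) * M)) :=
      ((continuous_const.sub continuous_id).mul continuous_const).tendsto 2
    simp only [sub_self, zero_mul] at h
    exact h.mono_left nhdsWithin_le_nhds
  have h0 : Tendsto (fun s : ℝ =>
      (2 - s) * (∫ p in T, ((p.1 + p.2) * (1 - p.1) * (1 - p.2)) ^ (-s)) - 3)
      (nhdsWithin 2 (Set.Iio 2)) (nhds 0) := by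
    apply squeeze_zero_norm' _ hg
    filter_upwards [hev] with s hs
    rw [Real.norm_eq_abs]
    exact main_bound s hs.1 hs.2
  have hfin := h0.add (tendsto_const_nhds (x := (3:ℝ)))
  simp only [zero_add] at hfin
  convert hfin using 2
  ring
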